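/- Fix integers k₁, k₂ ≥ 2 and set δ(ℓ) = |𝒞_ℓ|/|𝒜_ℓ|. Then δ(ℓ) is asymptotic to 1/ℓ as ℓ ranges over primes: for every ε > 0 there exists L such that for every prime ℓ > L, |ℓ·δ(ℓ) − 1| < ε. -/

import Mathlib

open Matrix Finset Polynomial

section Counting
variable {F : Type*} [Field F] [Fintype F] [DecidableEq F]

lemma card_line (b m : F) :
    Nat.card {c : F // b * c = m} =
      if b = 0 then (if m = 0 then Fintype.card F else 0) else 1 := by
  classical
  rcases eq_or_ne b 0 with hb | hb
  · subst hb
    rcases eq_or_ne m 0 with hm | hm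
    · simp only [if_pos rfl, if_pos hm]
      rw [Nat.card_congr (Equiv.subtypeUnivEquiv (by simp [hm]))]
      exact Nat.card_eq_fintype_card
    · simp only [if_pos rfl, if_neg hm]
      haveI : IsEmpty {c : F // (0:F) * c = m} := ⟨fun c => hm (by simpa using c.2.symm)⟩
      simpa using Nat.card_of_isEmpty (α := {c : F // (0:F) * c = m})
  · rw [if_neg hb]
    rw [Nat.card_congr (Equiv.subtypeEquivRight (q := fun c => c = b⁻¹ * m)
      (fun c => by show b * c = m ↔ c = b⁻¹ * m; rw [eq_inv_mul_iff_mul_eq₀ hb]))]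
    rw [Nat.card_eq_fintype_card, Fintype.card_subtype_eq]

lemma card_hyperbola (m : F) :
    Nat.card {y : F × F // y.1 * y.2 = m} =
      if m = 0 then 2 * Fintype.card F - 1 else Fintype.card F - 1 := by
  classical
  rw [Nat.card_congr (Equiv.subtypeProdEquivSigmaSubtype (fun a b : F => a * b = m))]
  rw [Nat.card_eq_fintype_card, Fintype.card_sigma]
  have : ∀ b : F, Fintype.card {c : F // b * c = m}
      = if b = 0 then (if m = 0 then Fintype.card F else 0) else 1 := by
    intro b; rw [← Nat.card_eq_fintype_card]; exact card_line b m
  simp_rw [this]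
  rw [Finset.sum_ite, Finset.sum_const, Finset.sum_const]
  rw [Finset.filter_eq', if_pos (mem_univ _), Finset.filter_ne', card_erase_of_mem (mem_univ _)]
  simp only [card_singleton, card_univ, one_smul, smul_eq_mul, mul_one]
  have hq : 1 ≤ Fintype.card F := Fintype.card_pos
  rcases eq_or_ne m 0 with hm | hm <;> simp [hm] <;> omega

lemma roots_le_two (t d : F) :
    (univ.filter (fun a : F => a * (t - a) = d)).card ≤ 2 := by
  classical
  set P : F[X] := X ^ 2 - C t * X + C d with hP
  have hPne : P ≠ 0 := by
    intro h
    have : P.coeff 2 = 0 := by rw [h]; simp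
    simp [hP, coeff_X_pow] at this
  have hdeg : P.natDegree ≤ 2 := by
    apply natDegree_le_iff_coeff_eq_zero.2
    intro n hn
    rw [hP]
    simp only [coeff_add, coeff_sub, coeff_X_pow, coeff_C, coeff_C_mul, coeff_X]
    rw [if_neg (by omega : ¬ n = 2), if_neg (by omega : ¬ 1 = n), if_neg (by omega : ¬ n = 0)]
    ring
  have hsub : (univ.filter (fun a : F => a * (t - a) = d)) ⊆ P.roots.toFinset := by
    intro a ha
    simp only [mem_filter, mem_univ, true_and] at ha
    rw [Multiset.mem_toFinset, mem_roots hPne]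
    simp [hP, IsRoot.def]
    ring_nf
    linear_combination -ha
  calc (univ.filter (fun a : F => a * (t - a) = d)).card
      ≤ P.roots.toFinset.card := Finset.card_le_card hsub
    _ ≤ Multiset.card P.roots := P.roots.toFinset_card_le
    _ ≤ P.natDegree := P.card_roots' 
    _ ≤ 2 := hdeg

def detTraceEquiv (t d : F) :
    {M : Matrix (Fin 2) (Fin 2) F // M.det = d ∧ M.trace = t} ≃
      {x : F × (F × F) // x.2.1 * x.2.2 = x.1 * (t - x.1) - d} where
  toFun M := ⟨(M.1 0 0, (M.1 0 1, M.1 1 0)), by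
    obtain ⟨hdet, htr⟩ := M.2
    rw [Matrix.det_fin_two] at hdet
    rw [Matrix.trace_fin_two] at htr
    simp only
    linear_combination (M.1 0 0) * htr - hdet⟩
  invFun x := ⟨!![x.1.1, x.1.2.1; x.1.2.2, t - x.1.1], by
    constructor
    · rw [Matrix.det_fin_two_of]
      linear_combination -x.2
    · rw [Matrix.trace_fin_two_of]
      ring⟩
  left_inv M := by
    obtain ⟨hdet, htr⟩ := M.2
    rw [Matrix.trace_fin_two] at htr
    apply Subtype.ext
    ext i j
    fin_cases i <;> fin_cases j <;> simp <;> linear_combination -htr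
  right_inv x := by
    apply Subtype.ext
    simp

def detEquiv (d : F) :
    {M : Matrix (Fin 2) (Fin 2) F // M.det = d} ≃
      {x : (F × F) × (F × F) // x.2.1 * x.2.2 = x.1.1 * x.1.2 - d} where
  toFun M := ⟨((M.1 0 0, M.1 1 1), (M.1 0 1, M.1 1 0)), by
    have hdet := M.2
    rw [Matrix.det_fin_two] at hdet
    simp only
    linear_combination -hdet⟩
  invFun x := ⟨!![x.1.1.1, x.1.2.1; x.1.2.2, x.1.1.2], by
    rw [Matrix.det_fin_two_of]
    linear_combination -x.2⟩
  left_inv M := by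
    apply Subtype.ext
    ext i j
    fin_cases i <;> fin_cases j <;> simp
  right_inv x := by
    apply Subtype.ext
    simp

lemma card_det_tr (t d : F) :
    Nat.card {M : Matrix (Fin 2) (Fin 2) F // M.det = d ∧ M.trace = t} =
      Fintype.card F * (Fintype.card F - 1) +
        (univ.filter (fun a : F => a * (t - a) = d)).card * Fintype.card F := by
  classical
  set q := Fintype.card F with hq
  have hq1 : 1 ≤ q := Fintype.card_pos
  refine ((Nat.card_congr (detTraceEquiv t d)).trans
    ((Nat.card_congr (Equiv.subtypeProdEquivSigmaSubtype
      (fun (a : F) (y : F × F) => y.1 * y.2 = a * (t - a) - d))).trans ?_))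
  rw [Nat.card_eq_fintype_card, Fintype.card_sigma]
  have key : ∀ a : F, Fintype.card {y : F × F // y.1 * y.2 = a * (t - a) - d}
      = (q - 1) + (if a * (t - a) = d then q else 0) := by
    intro a
    rw [← Nat.card_eq_fintype_card, card_hyperbola]
    rcases eq_or_ne (a * (t - a)) d with h | h
    · rw [if_pos (by rw [h, sub_self]), if_pos h]; omega
    · rw [if_neg (fun hc => h (by linear_combination hc)), if_neg h]; omega
  simp_rw [key]
  rw [Finset.sum_add_distrib, Finset.sum_const, ← Finset.sum_filter, Finset.sum_const,
    card_univ, smul_eq_mul, smul_eq_mul]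

lemma card_det (d : F) :
    Nat.card {M : Matrix (Fin 2) (Fin 2) F // M.det = d} =
      Fintype.card F * Fintype.card F * (Fintype.card F - 1) +
        (univ.filter (fun p : F × F => p.1 * p.2 = d)).card * Fintype.card F := by
  classical
  set q := Fintype.card F with hq
  refine ((Nat.card_congr (detEquiv d)).trans
    ((Nat.card_congr (Equiv.subtypeProdEquivSigmaSubtype
      (fun (a : F × F) (y : F × F) => y.1 * y.2 = a.1 * a.2 - d))).trans ?_))
  rw [Nat.card_eq_fintype_card, Fintype.card_sigma]
  have key : ∀ a : F × F, Fintype.card {y : F × F // y.1 * y.2 = a.1 * a.2 - d}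
      = (q - 1) + (if a.1 * a.2 = d then q else 0) := by
    intro a
    rw [← Nat.card_eq_fintype_card, card_hyperbola]
    rcases eq_or_ne (a.1 * a.2) d with h | h
    · rw [if_pos (by rw [h, sub_self]), if_pos h]
      have hq1 : 1 ≤ q := Fintype.card_pos
      omega
    · rw [if_neg (fun hc => h (by linear_combination hc)), if_neg h]; omega
  simp_rw [key]
  rw [Finset.sum_add_distrib, Finset.sum_const, ← Finset.sum_filter, Finset.sum_const,
    card_univ, smul_eq_mul, smul_eq_mul, Fintype.card_prod]

lemma card_gl (P : Matrix (Fin 2) (Fin 2) F → Prop)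
    (h : ∀ M, P M → IsUnit M.det) :
    Nat.card {A : GL (Fin 2) F // P ↑A} = Nat.card {M : Matrix (Fin 2) (Fin 2) F // P M} := by
  refine Nat.card_congr ⟨fun A => ⟨↑A.1, A.2⟩, fun M =>
    ⟨((Matrix.isUnit_iff_isUnit_det M.1).2 (h M.1 M.2)).unit, by
      rw [IsUnit.unit_spec]; exact M.2⟩, fun A => ?_, fun M => ?_⟩
  · exact Subtype.ext (Units.ext (IsUnit.unit_spec _))
  · exact Subtype.ext (IsUnit.unit_spec ((Matrix.isUnit_iff_isUnit_det M.1).2 (h M.1 M.2)))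

lemma card_gl_det (d : F) (hd : d ≠ 0) :
    Nat.card {A : GL (Fin 2) F // (↑A : Matrix (Fin 2) (Fin 2) F).det = d} =
      Fintype.card F * Fintype.card F * (Fintype.card F - 1) +
        (Fintype.card F - 1) * Fintype.card F := by
  classical
  rw [card_gl (fun M => M.det = d) (fun M hM => by rw [hM]; exact isUnit_iff_ne_zero.2 hd),
    card_det]
  congr 2
  rw [← Fintype.card_subtype, ← Nat.card_eq_fintype_card, card_hyperbola, if_neg hd]

lemma card_gl_det_tr_le (t d : F) (hd : d ≠ 0) :
    Nat.card {A : GL (Fin 2) F //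
        (↑A : Matrix (Fin 2) (Fin 2) F).det = d ∧ (↑A : Matrix (Fin 2) (Fin 2) F).trace = t} ≤
      Fintype.card F * (Fintype.card F - 1) + 2 * Fintype.card F := by
  classical
  rw [card_gl (fun M => M.det = d ∧ M.trace = t)
    (fun M hM => by rw [hM.1]; exact isUnit_iff_ne_zero.2 hd), card_det_tr]
  have := roots_le_two t d
  nlinarith [Fintype.card_pos (α := F)]

lemma card_gl_det_tr_ge (t d : F) (hd : d ≠ 0) :
    Fintype.card F * (Fintype.card F - 1) ≤
      Nat.card {A : GL (Fin 2) F //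
        (↑A : Matrix (Fin 2) (Fin 2) F).det = d ∧ (↑A : Matrix (Fin 2) (Fin 2) F).trace = t} := by
  classical
  rw [card_gl (fun M => M.det = d ∧ M.trace = t)
    (fun M hM => by rw [hM.1]; exact isUnit_iff_ne_zero.2 hd), card_det_tr]
  omega

end Counting

section Assembly
variable {F : Type*} [Field F] [Fintype F] [DecidableEq F] (k₁ k₂ : ℕ)

open Classical in
noncomputable def detSet : Finset (F × F) :=
  univ.filter (fun d : F × F => ∃ v : Fˣ, d.1 = (v : F) ^ (k₁ - 1) ∧ d.2 = (v : F) ^ (k₂ - 1))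

lemma detSet_nonempty : (detSet (F := F) k₁ k₂).Nonempty := by
  classical
  refine ⟨(1, 1), ?_⟩
  simp only [detSet, mem_filter, mem_univ, true_and]
  exact ⟨1, by simp, by simp⟩

lemma detSet_ne_zero {d : F × F} (hd : d ∈ detSet (F := F) k₁ k₂) : d.1 ≠ 0 ∧ d.2 ≠ 0 := by
  classical
  simp only [detSet, mem_filter, mem_univ, true_and] at hd
  obtain ⟨v, h1, h2⟩ := hd
  exact ⟨h1 ▸ pow_ne_zero _ v.ne_zero, h2 ▸ pow_ne_zero _ v.ne_zero⟩

open Classical in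
lemma card_A :
    Nat.card {p : GL (Fin 2) F × GL (Fin 2) F //
        ∃ v : Fˣ, (↑p.1 : Matrix (Fin 2) (Fin 2) F).det = (v : F) ^ (k₁ - 1) ∧
          (↑p.2 : Matrix (Fin 2) (Fin 2) F).det = (v : F) ^ (k₂ - 1)} =
      (detSet (F := F) k₁ k₂).card *
        (Fintype.card F * Fintype.card F * (Fintype.card F - 1) +
          (Fintype.card F - 1) * Fintype.card F) ^ 2 := by
  classical
  rw [Nat.card_eq_fintype_card, Fintype.card_subtype]
  rw [Finset.card_eq_sum_card_fiberwise
    (f := fun p : GL (Fin 2) F × GL (Fin 2) F =>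
      ((↑p.1 : Matrix (Fin 2) (Fin 2) F).det, (↑p.2 : Matrix (Fin 2) (Fin 2) F).det))
    (t := detSet (F := F) k₁ k₂)
    (fun p hp => by
      simp only [Finset.mem_coe, mem_filter, mem_univ, true_and] at hp
      obtain ⟨v, h1, h2⟩ := hp
      simp only [Finset.mem_coe, detSet, mem_filter, mem_univ, true_and]
      exact ⟨v, h1, h2⟩)]
  rw [Finset.sum_congr rfl (fun d hd => ?_), Finset.sum_const, smul_eq_mul]
  rw [Finset.filter_filter]
  have hiff : ∀ p : GL (Fin 2) F × GL (Fin 2) F,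
      ((∃ v : Fˣ, (↑p.1 : Matrix (Fin 2) (Fin 2) F).det = (v : F) ^ (k₁ - 1) ∧
          (↑p.2 : Matrix (Fin 2) (Fin 2) F).det = (v : F) ^ (k₂ - 1)) ∧
        ((↑p.1 : Matrix (Fin 2) (Fin 2) F).det, (↑p.2 : Matrix (Fin 2) (Fin 2) F).det) = d) ↔
      ((↑p.1 : Matrix (Fin 2) (Fin 2) F).det = d.1 ∧
        (↑p.2 : Matrix (Fin 2) (Fin 2) F).det = d.2) := by
    intro p
    constructor
    · rintro ⟨-, h⟩
      exact ⟨congrArg Prod.fst h, congrArg Prod.snd h⟩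
    · rintro ⟨h1, h2⟩
      simp only [detSet, mem_filter, mem_univ, true_and] at hd
      obtain ⟨v, hv1, hv2⟩ := hd
      exact ⟨⟨v, h1.trans hv1, h2.trans hv2⟩, Prod.ext h1 h2⟩
  rw [Finset.filter_congr (fun p _ => hiff p)]
  rw [← Finset.univ_product_univ, Finset.filter_product
    (fun A : GL (Fin 2) F => (↑A : Matrix (Fin 2) (Fin 2) F).det = d.1)
    (fun B : GL (Fin 2) F => (↑B : Matrix (Fin 2) (Fin 2) F).det = d.2), Finset.card_product]
  obtain ⟨hd1, hd2⟩ := detSet_ne_zero k₁ k₂ hd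
  rw [← Fintype.card_subtype, ← Fintype.card_subtype, ← Nat.card_eq_fintype_card,
    ← Nat.card_eq_fintype_card, card_gl_det d.1 hd1, card_gl_det d.2 hd2, sq]

open Classical in
lemma card_C_eq :
    Nat.card {p : GL (Fin 2) F × GL (Fin 2) F //
        (∃ v : Fˣ, (↑p.1 : Matrix (Fin 2) (Fin 2) F).det = (v : F) ^ (k₁ - 1) ∧
          (↑p.2 : Matrix (Fin 2) (Fin 2) F).det = (v : F) ^ (k₂ - 1)) ∧
        (↑p.1 : Matrix (Fin 2) (Fin 2) F).trace = (↑p.2 : Matrix (Fin 2) (Fin 2) F).trace} =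
      ∑ d ∈ detSet (F := F) k₁ k₂, ∑ t : F,
        Nat.card {A : GL (Fin 2) F //
          (↑A : Matrix (Fin 2) (Fin 2) F).det = d.1 ∧ (↑A : Matrix (Fin 2) (Fin 2) F).trace = t} *
        Nat.card {B : GL (Fin 2) F //
          (↑B : Matrix (Fin 2) (Fin 2) F).det = d.2 ∧ (↑B : Matrix (Fin 2) (Fin 2) F).trace = t} := by
  classical
  rw [Nat.card_eq_fintype_card, Fintype.card_subtype]
  rw [Finset.card_eq_sum_card_fiberwise
    (f := fun p : GL (Fin 2) F × GL (Fin 2) F =>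
      ((↑p.1 : Matrix (Fin 2) (Fin 2) F).det, (↑p.2 : Matrix (Fin 2) (Fin 2) F).det))
    (t := detSet (F := F) k₁ k₂)
    (fun p hp => by
      simp only [Finset.mem_coe, mem_filter, mem_univ, true_and] at hp
      obtain ⟨⟨v, h1, h2⟩, -⟩ := hp
      simp only [Finset.mem_coe, detSet, mem_filter, mem_univ, true_and]
      exact ⟨v, h1, h2⟩)]
  refine Finset.sum_congr rfl (fun d hd => ?_)
  rw [Finset.filter_filter]
  have hiff : ∀ p : GL (Fin 2) F × GL (Fin 2) F,
      (((∃ v : Fˣ, (↑p.1 : Matrix (Fin 2) (Fin 2) F).det = (v : F) ^ (k₁ - 1) ∧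
          (↑p.2 : Matrix (Fin 2) (Fin 2) F).det = (v : F) ^ (k₂ - 1)) ∧
        (↑p.1 : Matrix (Fin 2) (Fin 2) F).trace = (↑p.2 : Matrix (Fin 2) (Fin 2) F).trace) ∧
        ((↑p.1 : Matrix (Fin 2) (Fin 2) F).det, (↑p.2 : Matrix (Fin 2) (Fin 2) F).det) = d) ↔
      ((↑p.1 : Matrix (Fin 2) (Fin 2) F).det = d.1 ∧
        (↑p.2 : Matrix (Fin 2) (Fin 2) F).det = d.2 ∧
        (↑p.1 : Matrix (Fin 2) (Fin 2) F).trace = (↑p.2 : Matrix (Fin 2) (Fin 2) F).trace) := by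
    intro p
    constructor
    · rintro ⟨⟨-, htr⟩, h⟩
      exact ⟨congrArg Prod.fst h, congrArg Prod.snd h, htr⟩
    · rintro ⟨h1, h2, htr⟩
      simp only [detSet, mem_filter, mem_univ, true_and] at hd
      obtain ⟨v, hv1, hv2⟩ := hd
      exact ⟨⟨⟨v, h1.trans hv1, h2.trans hv2⟩, htr⟩, Prod.ext h1 h2⟩
  rw [Finset.filter_congr (fun p _ => hiff p)]
  rw [Finset.card_eq_sum_card_fiberwise
    (f := fun p : GL (Fin 2) F × GL (Fin 2) F => (↑p.1 : Matrix (Fin 2) (Fin 2) F).trace)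
    (t := (univ : Finset F)) (fun p _ => mem_univ _)]
  refine Finset.sum_congr rfl (fun t _ => ?_)
  rw [Finset.filter_filter]
  have hiff2 : ∀ p : GL (Fin 2) F × GL (Fin 2) F,
      (((↑p.1 : Matrix (Fin 2) (Fin 2) F).det = d.1 ∧
        (↑p.2 : Matrix (Fin 2) (Fin 2) F).det = d.2 ∧
        (↑p.1 : Matrix (Fin 2) (Fin 2) F).trace = (↑p.2 : Matrix (Fin 2) (Fin 2) F).trace) ∧
        (↑p.1 : Matrix (Fin 2) (Fin 2) F).trace = t) ↔
      (((↑p.1 : Matrix (Fin 2) (Fin 2) F).det = d.1 ∧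
          (↑p.1 : Matrix (Fin 2) (Fin 2) F).trace = t) ∧
        ((↑p.2 : Matrix (Fin 2) (Fin 2) F).det = d.2 ∧
          (↑p.2 : Matrix (Fin 2) (Fin 2) F).trace = t)) := by
    intro p
    constructor
    · rintro ⟨⟨h1, h2, htr⟩, ht⟩
      exact ⟨⟨h1, ht⟩, h2, htr ▸ ht⟩
    · rintro ⟨⟨h1, ht1⟩, h2, ht2⟩
      exact ⟨⟨h1, h2, ht1.trans ht2.symm⟩, ht1⟩
  rw [Finset.filter_congr (fun p _ => hiff2 p)]
  rw [← Finset.univ_product_univ, Finset.filter_product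
    (fun A : GL (Fin 2) F =>
      (↑A : Matrix (Fin 2) (Fin 2) F).det = d.1 ∧ (↑A : Matrix (Fin 2) (Fin 2) F).trace = t)
    (fun B : GL (Fin 2) F =>
      (↑B : Matrix (Fin 2) (Fin 2) F).det = d.2 ∧ (↑B : Matrix (Fin 2) (Fin 2) F).trace = t),
    Finset.card_product]
  rw [← Fintype.card_subtype, ← Fintype.card_subtype, ← Nat.card_eq_fintype_card,
    ← Nat.card_eq_fintype_card]

end Assembly

lemma final_bound_q (C A S ε : ℚ) (hS2 : 2 ≤ S) (hA : 0 < A) (hC : 0 ≤ C)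
    (H1 : (S+1) * C * (S*S) ≤ (S+1)^2 * A)
    (H2 : (S+1)^2 * A ≤ (S+1) * C * ((S+2)*(S+2)))
    (hε : 0 < ε) (hεQ : 15 < ε * (S+1)) :
    |(S+1) * (C / A) - 1| < ε := by
  have hCu : (S+1) * (C/A) ≤ (S+1)^2 / (S*S) := by
    rw [mul_div_assoc', div_le_div_iff₀ hA (by nlinarith)]
    exact H1
  have hCl : (S+1)^2 / ((S+2)*(S+2)) ≤ (S+1) * (C/A) := by
    rw [mul_div_assoc', le_div_iff₀ hA, div_mul_eq_mul_div, div_le_iff₀ (by nlinarith)]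
    exact H2
  rw [abs_lt]
  constructor
  · have e1 : ε * (S+1) * (S+2) > 15 * (S+2) := by nlinarith
    have e2 : ε * ((S+2)*(S+2)) ≥ ε * (S+1) * (S+2) := by nlinarith
    have key : 2*S + 3 < ε * ((S+2)*(S+2)) := by linarith
    have : 1 - ε < (S+1)^2 / ((S+2)*(S+2)) := by
      rw [lt_div_iff₀ (by nlinarith)]
      nlinarith
    linarith
  · have e1 : ε * (S+1) * S > 15 * S := by nlinarith
    have e2 : ε * (S*S) * 2 ≥ ε * (S+1) * S := by nlinarith
    have key : 2*S + 1 < ε * (S*S) := by linarith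
    have : (S+1)^2 / (S*S) < 1 + ε := by
      rw [div_lt_iff₀ (by nlinarith)]
      nlinarith
    linarith

lemma final_bound (c a s : ℕ) (hs2 : 2 ≤ s) (ha0 : 0 < a)
    (H1 : (s+1) * c * (s*s) ≤ (s+1)^2 * a)
    (H2 : (s+1)^2 * a ≤ (s+1) * c * ((s+2)*(s+2)))
    (ε : ℚ) (hε : 0 < ε) (hεQ : 15 < ε * ((s:ℚ)+1)) :
    |((s+1 : ℕ) : ℚ) * ((c : ℚ) / (a : ℚ)) - 1| < ε := by
  have h := final_bound_q (c:ℚ) (a:ℚ) (s:ℚ) ε (by exact_mod_cast hs2)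
    (by exact_mod_cast ha0) (by positivity) (by exact_mod_cast H1) (by exact_mod_cast H2) hε hεQ
  push_cast
  convert h using 3
theorem stmt_16 (k₁ k₂ : ℕ) (hk₁ : 2 ≤ k₁) (hk₂ : 2 ≤ k₂) :
    ∀ ε : ℚ, 0 < ε → ∃ L : ℕ, ∀ ℓ : ℕ, ℓ.Prime → L < ℓ →
      |(ℓ : ℚ) *
        ((Nat.card {p : Matrix.GeneralLinearGroup (Fin 2) (ZMod ℓ) ×
              Matrix.GeneralLinearGroup (Fin 2) (ZMod ℓ) //
            (∃ v : (ZMod ℓ)ˣ,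
              (p.1 : Matrix (Fin 2) (Fin 2) (ZMod ℓ)).det = (v : ZMod ℓ) ^ (k₁ - 1) ∧
              (p.2 : Matrix (Fin 2) (Fin 2) (ZMod ℓ)).det = (v : ZMod ℓ) ^ (k₂ - 1)) ∧
            Matrix.trace (p.1 : Matrix (Fin 2) (Fin 2) (ZMod ℓ)) =
              Matrix.trace (p.2 : Matrix (Fin 2) (Fin 2) (ZMod ℓ))} : ℚ) /
          (Nat.card {p : Matrix.GeneralLinearGroup (Fin 2) (ZMod ℓ) ×
              Matrix.GeneralLinearGroup (Fin 2) (ZMod ℓ) //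
            ∃ v : (ZMod ℓ)ˣ,
              (p.1 : Matrix (Fin 2) (Fin 2) (ZMod ℓ)).det = (v : ZMod ℓ) ^ (k₁ - 1) ∧
              (p.2 : Matrix (Fin 2) (Fin 2) (ZMod ℓ)).det = (v : ZMod ℓ) ^ (k₂ - 1)} : ℚ)) -
        1| < ε := by
  intro ε hε
  refine ⟨max 2 ⌈(15:ℚ)/ε⌉₊, fun ℓ hp hℓ => ?_⟩
  haveI : Fact ℓ.Prime := ⟨hp⟩
  have h2 : 2 < ℓ := lt_of_le_of_lt (le_max_left _ _) hℓ
  have hεQ : (15:ℚ) < ε * (ℓ : ℚ) := by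
    have h1 : (15:ℚ)/ε ≤ (⌈(15:ℚ)/ε⌉₊ : ℚ) := Nat.le_ceil _
    have h2' : ((⌈(15:ℚ)/ε⌉₊ : ℕ) : ℚ) ≤ ((max 2 ⌈(15:ℚ)/ε⌉₊ : ℕ) : ℚ) := by
      exact_mod_cast le_max_right _ _
    have h3 : ((max 2 ⌈(15:ℚ)/ε⌉₊ : ℕ) : ℚ) < (ℓ : ℚ) := by exact_mod_cast hℓ
    have h4 : (15:ℚ)/ε < (ℓ:ℚ) := by linarith
    rw [div_lt_iff₀ hε] at h4
    linarith
  obtain ⟨s, hs⟩ : ∃ s, ℓ = s + 1 := ⟨ℓ - 1, by omega⟩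
  have hs2 : 2 ≤ s := by omega
  subst hs
  have hεQ' : (15:ℚ) < ε * ((s:ℚ)+1) := by push_cast at hεQ ⊢; linarith
  classical
  have hq : Fintype.card (ZMod (s+1)) = s + 1 := ZMod.card _
  set D := detSet (F := ZMod (s+1)) k₁ k₂ with hD
  have hDpos : 0 < D.card := Finset.card_pos.2 (detSet_nonempty k₁ k₂)
  -- |𝒜|
  have ha := card_A (F := ZMod (s+1)) k₁ k₂
  rw [hq, Nat.add_sub_cancel] at ha
  -- |𝒞| bounds
  have hc := card_C_eq (F := ZMod (s+1)) k₁ k₂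
  have hcU : Nat.card {p : GL (Fin 2) (ZMod (s+1)) × GL (Fin 2) (ZMod (s+1)) //
        (∃ v : (ZMod (s+1))ˣ,
          (↑p.1 : Matrix (Fin 2) (Fin 2) (ZMod (s+1))).det = (v : ZMod (s+1)) ^ (k₁ - 1) ∧
          (↑p.2 : Matrix (Fin 2) (Fin 2) (ZMod (s+1))).det = (v : ZMod (s+1)) ^ (k₂ - 1)) ∧
        (↑p.1 : Matrix (Fin 2) (Fin 2) (ZMod (s+1))).trace =
          (↑p.2 : Matrix (Fin 2) (Fin 2) (ZMod (s+1))).trace} ≤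
      D.card * ((s+1) * (((s+1)*s + 2*(s+1)) * ((s+1)*s + 2*(s+1)))) := by
    rw [hc]
    calc ∑ d ∈ D, ∑ t : ZMod (s+1), _ * _
        ≤ ∑ d ∈ D, ∑ _t : ZMod (s+1), ((s+1)*s + 2*(s+1)) * ((s+1)*s + 2*(s+1)) := by
          refine Finset.sum_le_sum fun d hd => Finset.sum_le_sum fun t _ => ?_
          obtain ⟨hd1, hd2⟩ := detSet_ne_zero k₁ k₂ hd
          have hb1 := card_gl_det_tr_le t d.1 hd1
          have hb2 := card_gl_det_tr_le t d.2 hd2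
          rw [hq, Nat.add_sub_cancel] at hb1 hb2
          exact Nat.mul_le_mul hb1 hb2
      _ = D.card * ((s+1) * (((s+1)*s + 2*(s+1)) * ((s+1)*s + 2*(s+1)))) := by
          simp only [Finset.sum_const, Finset.card_univ, hq, smul_eq_mul, mul_assoc]
  have hcL : D.card * ((s+1) * (((s+1)*s) * ((s+1)*s))) ≤
      Nat.card {p : GL (Fin 2) (ZMod (s+1)) × GL (Fin 2) (ZMod (s+1)) //
        (∃ v : (ZMod (s+1))ˣ,
          (↑p.1 : Matrix (Fin 2) (Fin 2) (ZMod (s+1))).det = (v : ZMod (s+1)) ^ (k₁ - 1) ∧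
          (↑p.2 : Matrix (Fin 2) (Fin 2) (ZMod (s+1))).det = (v : ZMod (s+1)) ^ (k₂ - 1)) ∧
        (↑p.1 : Matrix (Fin 2) (Fin 2) (ZMod (s+1))).trace =
          (↑p.2 : Matrix (Fin 2) (Fin 2) (ZMod (s+1))).trace} := by
    rw [hc]
    calc D.card * ((s+1) * (((s+1)*s) * ((s+1)*s)))
        = ∑ d ∈ D, ∑ _t : ZMod (s+1), ((s+1)*s) * ((s+1)*s) := by
          simp only [Finset.sum_const, Finset.card_univ, hq, smul_eq_mul, mul_assoc]
      _ ≤ ∑ d ∈ D, ∑ t : ZMod (s+1), _ * _ := by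
          refine Finset.sum_le_sum fun d hd => Finset.sum_le_sum fun t _ => ?_
          obtain ⟨hd1, hd2⟩ := detSet_ne_zero k₁ k₂ hd
          have hb1 := card_gl_det_tr_ge t d.1 hd1
          have hb2 := card_gl_det_tr_ge t d.2 hd2
          rw [hq, Nat.add_sub_cancel] at hb1 hb2
          exact Nat.mul_le_mul hb1 hb2
  have ha0 : 0 < Nat.card {p : GL (Fin 2) (ZMod (s+1)) × GL (Fin 2) (ZMod (s+1)) //
      ∃ v : (ZMod (s+1))ˣ,
        (↑p.1 : Matrix (Fin 2) (Fin 2) (ZMod (s+1))).det = (v : ZMod (s+1)) ^ (k₁ - 1) ∧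
        (↑p.2 : Matrix (Fin 2) (Fin 2) (ZMod (s+1))).det = (v : ZMod (s+1)) ^ (k₂ - 1)} := by
    rw [ha]
    have hbase : 0 < (s+1) * (s+1) * s + s * (s+1) := by
      have h := Nat.mul_pos (show 0 < s by omega) (Nat.succ_pos s)
      exact lt_of_lt_of_le h (Nat.le_add_left _ _)
    exact Nat.mul_pos hDpos (pow_pos hbase 2)
  have H1 : (s+1) * Nat.card {p : GL (Fin 2) (ZMod (s+1)) × GL (Fin 2) (ZMod (s+1)) //
        (∃ v : (ZMod (s+1))ˣ,
          (↑p.1 : Matrix (Fin 2) (Fin 2) (ZMod (s+1))).det = (v : ZMod (s+1)) ^ (k₁ - 1) ∧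
          (↑p.2 : Matrix (Fin 2) (Fin 2) (ZMod (s+1))).det = (v : ZMod (s+1)) ^ (k₂ - 1)) ∧
        (↑p.1 : Matrix (Fin 2) (Fin 2) (ZMod (s+1))).trace =
          (↑p.2 : Matrix (Fin 2) (Fin 2) (ZMod (s+1))).trace} * (s*s) ≤
      (s+1)^2 * Nat.card {p : GL (Fin 2) (ZMod (s+1)) × GL (Fin 2) (ZMod (s+1)) //
        ∃ v : (ZMod (s+1))ˣ,
          (↑p.1 : Matrix (Fin 2) (Fin 2) (ZMod (s+1))).det = (v : ZMod (s+1)) ^ (k₁ - 1) ∧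
          (↑p.2 : Matrix (Fin 2) (Fin 2) (ZMod (s+1))).det = (v : ZMod (s+1)) ^ (k₂ - 1)} := by
    calc (s+1) * _ * (s*s)
        ≤ (s+1) * (D.card * ((s+1) * (((s+1)*s + 2*(s+1)) * ((s+1)*s + 2*(s+1))))) * (s*s) :=
          Nat.mul_le_mul_right _ (Nat.mul_le_mul_left _ hcU)
      _ = (s+1)^2 * (D.card * ((s+1) * (s+1) * s + s * (s+1))^2) := by ring
      _ = _ := by rw [← ha]
  have H2 : (s+1)^2 * Nat.card {p : GL (Fin 2) (ZMod (s+1)) × GL (Fin 2) (ZMod (s+1)) //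
        ∃ v : (ZMod (s+1))ˣ,
          (↑p.1 : Matrix (Fin 2) (Fin 2) (ZMod (s+1))).det = (v : ZMod (s+1)) ^ (k₁ - 1) ∧
          (↑p.2 : Matrix (Fin 2) (Fin 2) (ZMod (s+1))).det = (v : ZMod (s+1)) ^ (k₂ - 1)} ≤
      (s+1) * Nat.card {p : GL (Fin 2) (ZMod (s+1)) × GL (Fin 2) (ZMod (s+1)) //
        (∃ v : (ZMod (s+1))ˣ,
          (↑p.1 : Matrix (Fin 2) (Fin 2) (ZMod (s+1))).det = (v : ZMod (s+1)) ^ (k₁ - 1) ∧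
          (↑p.2 : Matrix (Fin 2) (Fin 2) (ZMod (s+1))).det = (v : ZMod (s+1)) ^ (k₂ - 1)) ∧
        (↑p.1 : Matrix (Fin 2) (Fin 2) (ZMod (s+1))).trace =
          (↑p.2 : Matrix (Fin 2) (Fin 2) (ZMod (s+1))).trace} * ((s+2)*(s+2)) := by
    calc (s+1)^2 * _
        = (s+1) * (D.card * ((s+1) * (((s+1)*s) * ((s+1)*s)))) * ((s+2)*(s+2)) := by
          rw [ha]; ring
      _ ≤ (s+1) * _ * ((s+2)*(s+2)) :=
          Nat.mul_le_mul_right _ (Nat.mul_le_mul_left _ hcL)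
  exact final_bound _ _ s hs2 ha0 H1 H2 ε hε hεQ'
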